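/- Every element of Map₂ can be written as a product of a finite sequence of the generators ζ₁, ζ₂, ζ₃, ζ₄, ζ₅, using only the generators themselves and not their inverses (i.e. every element of Map₂ is a positive word in ζ₁,…,ζ₅). -/

import Mathlib

/-- A single Hurwitz move: replace two consecutive entries `(x, y)` by `(x y x⁻¹, x)`. -/
def HurwitzMove {G : Type*} [Group G] (F F' : List G) : Prop :=
  ∃ (l₁ l₂ : List G) (x y : G),
    F = l₁ ++ x :: y :: l₂ ∧ F' = l₁ ++ (x * y * x⁻¹) :: x :: l₂

/-- Hurwitz equivalence: the reflexive-symmetric-transitive closure of Hurwitz moves.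
(The symmetric closure accounts for the inverse move `(x, y) ↦ (y, y⁻¹ x y)`.) -/
def HurwitzEquiv {G : Type*} [Group G] : List G → List G → Prop :=
  Relation.EqvGen HurwitzMove

/-- `n`-fold concatenation of a factorization with itself. -/
def fpow {G : Type*} (F : List G) (n : ℕ) : List G :=
  (List.replicate n F).flatten

/-- Simultaneous conjugation of all entries of a factorization by `φ`: `τ ↦ φ⁻¹ τ φ`. -/
def fconj {G : Type*} [Group G] (F : List G) (φ : G) : List G :=
  F.map fun τ => φ⁻¹ * τ * φ

/-- Generators of the free group on five letters. -/
abbrev fg (i : Fin 5) : FreeGroup (Fin 5) := FreeGroup.of i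

/-- The word `ζ₁ζ₂ζ₃ζ₄ζ₅` in the free group. -/
def Δw : FreeGroup (Fin 5) := fg 0 * fg 1 * fg 2 * fg 3 * fg 4

/-- The word `ζ₁ζ₂ζ₃ζ₄ζ₅²ζ₄ζ₃ζ₂ζ₁` in the free group. -/
def Iw : FreeGroup (Fin 5) :=
  fg 0 * fg 1 * fg 2 * fg 3 * fg 4 * fg 4 * fg 3 * fg 2 * fg 1 * fg 0

/-- Relations for the presentation of the genus-2 mapping class group `Map₂`:
commutations `ζᵢζⱼ = ζⱼζᵢ` for `|i - j| ≥ 2`, braid relations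
`ζᵢζᵢ₊₁ζᵢ = ζᵢ₊₁ζᵢζᵢ₊₁`, `(ζ₁ζ₂ζ₃ζ₄ζ₅)⁶ = 1`, `I = ζ₁ζ₂ζ₃ζ₄ζ₅²ζ₄ζ₃ζ₂ζ₁` is central,
and `I² = 1`. -/
def map2Rels : Set (FreeGroup (Fin 5)) :=
  { r | (∃ i j : Fin 5, (i : ℕ) + 2 ≤ (j : ℕ) ∧ r = fg i * fg j * (fg i)⁻¹ * (fg j)⁻¹) ∨
        (∃ i : Fin 4, r = fg i.castSucc * fg i.succ * fg i.castSucc *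
          (fg i.succ * fg i.castSucc * fg i.succ)⁻¹) ∨
        r = Δw ^ 6 ∨
        (∃ i : Fin 5, r = Iw * fg i * Iw⁻¹ * (fg i)⁻¹) ∨
        r = Iw ^ 2 }

/-- The mapping class group of a closed genus-2 surface, via its standard presentation. -/
abbrev Map₂ : Type := PresentedGroup map2Rels

/-- The Dehn twist generators `ζ₁, …, ζ₅` (indexed by `Fin 5`, so `ζ 0 = ζ₁`, …). -/
def ζ (i : Fin 5) : Map₂ := PresentedGroup.of i

/-- The hyperelliptic involution `I = ζ₁ζ₂ζ₃ζ₄ζ₅²ζ₄ζ₃ζ₂ζ₁` as an element of `Map₂`. -/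
def Ihe : Map₂ := ζ 0 * ζ 1 * ζ 2 * ζ 3 * ζ 4 * ζ 4 * ζ 3 * ζ 2 * ζ 1 * ζ 0

/-- The separating Dehn twist `σ = (ζ₁ζ₂)⁶`. -/
def σ : Map₂ := (ζ 0 * ζ 1) ^ 6

/-- The factorization `T = ζ₁·ζ₂·ζ₃·ζ₄·ζ₅·ζ₅·ζ₄·ζ₃·ζ₂·ζ₁`. -/
def T : List Map₂ := [ζ 0, ζ 1, ζ 2, ζ 3, ζ 4, ζ 4, ζ 3, ζ 2, ζ 1, ζ 0]

/-- The factorization `W₀ = (T)²`. -/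
def W₀ : List Map₂ := T ++ T

/-- The factorization `W₁ = (ζ₁·ζ₂·ζ₃·ζ₄·ζ₅)⁶`. -/
def W₁ : List Map₂ := fpow [ζ 0, ζ 1, ζ 2, ζ 3, ζ 4] 6

/-- The factorization `Φ_f = ζ₃·ζ₄·ζ₅·ζ₂·ζ₃·ζ₄·ζ₁·ζ₂·ζ₃`. -/
def Φf : List Map₂ := [ζ 2, ζ 3, ζ 4, ζ 1, ζ 2, ζ 3, ζ 0, ζ 1, ζ 2]

/-- The factorization `W₂ = σ·(ζ₃·ζ₄·ζ₅·ζ₂·ζ₃·ζ₄·ζ₁·ζ₂·ζ₃)²·T`. -/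
def W₂ : List Map₂ := σ :: (Φf ++ Φf ++ T)

lemma zeta_mk (i : Fin 5) : (QuotientGroup.mk (FreeGroup.of i) : Map₂) = ζ i := rfl

lemma rel_one : (ζ 0 * ζ 1 * ζ 2 * ζ 3 * ζ 4) ^ 6 = 1 := by
  have hmem : Δw ^ 6 ∈ map2Rels := Or.inr (Or.inr (Or.inl rfl))
  have h1 : (QuotientGroup.mk (Δw ^ 6) : Map₂) = 1 :=
    (QuotientGroup.eq_one_iff _).mpr (Subgroup.subset_normalClosure hmem)
  rw [QuotientGroup.mk_pow] at h1
  simp [Δw, fg, QuotientGroup.mk_mul, zeta_mk] at h1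
  exact h1

private lemma pow6 {G : Type*} [Group G] (x : G) : x ^ 6 = x * (x * (x * (x * (x * x)))) := by
  rw [show (6 : ℕ) = 5 + 1 from rfl, pow_succ, show (5 : ℕ) = 4 + 1 from rfl, pow_succ,
    show (4 : ℕ) = 3 + 1 from rfl, pow_succ, show (3 : ℕ) = 2 + 1 from rfl, pow_succ,
    pow_two]
  simp [mul_assoc]

private lemma zpow6 {G : Type*} [Group G] (x : G) :
    x ^ (6 : ℤ) = x * (x * (x * (x * (x * x)))) := by
  rw [show ((6 : ℤ)) = ((6 : ℕ) : ℤ) by norm_num, zpow_natCast, pow6]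

private lemma conj_one {G : Type*} [Group G] (c : G) {x : G} (h : c * x * c⁻¹ = 1) : x = 1 := by
  have := congrArg (fun y => c⁻¹ * y * c) h
  simpa [mul_assoc] using this

lemma zeta_inv_pos (i : Fin 5) : ∃ l : List (Fin 5), (ζ i)⁻¹ = (l.map ζ).prod := by
  fin_cases i
  · refine ⟨[1, 2, 3, 4, 0, 1, 2, 3, 4, 0, 1, 2, 3, 4, 0, 1, 2, 3, 4, 0, 1, 2, 3, 4, 0, 1, 2, 3, 4], ?_⟩
    show (ζ 0)⁻¹ = _
    apply inv_eq_of_mul_eq_one_right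
    simp only [List.map_cons, List.map_nil, List.prod_cons, List.prod_nil, mul_one]
    rw [← rel_one]; group; simp only [pow6, zpow6, mul_assoc]
  · refine ⟨[2, 3, 4, 0, 1, 2, 3, 4, 0, 1, 2, 3, 4, 0, 1, 2, 3, 4, 0, 1, 2, 3, 4, 0, 1, 2, 3, 4, 0], ?_⟩
    show (ζ 1)⁻¹ = _
    apply inv_eq_of_mul_eq_one_right
    simp only [List.map_cons, List.map_nil, List.prod_cons, List.prod_nil, mul_one]
    apply conj_one (ζ 0)
    rw [← rel_one]; group; simp only [pow6, zpow6, mul_assoc]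
  · refine ⟨[3, 4, 0, 1, 2, 3, 4, 0, 1, 2, 3, 4, 0, 1, 2, 3, 4, 0, 1, 2, 3, 4, 0, 1, 2, 3, 4, 0, 1], ?_⟩
    show (ζ 2)⁻¹ = _
    apply inv_eq_of_mul_eq_one_right
    simp only [List.map_cons, List.map_nil, List.prod_cons, List.prod_nil, mul_one]
    apply conj_one (ζ 0 * ζ 1)
    rw [← rel_one]; group; simp only [pow6, zpow6, mul_assoc]
  · refine ⟨[4, 0, 1, 2, 3, 4, 0, 1, 2, 3, 4, 0, 1, 2, 3, 4, 0, 1, 2, 3, 4, 0, 1, 2, 3, 4, 0, 1, 2], ?_⟩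
    show (ζ 3)⁻¹ = _
    apply inv_eq_of_mul_eq_one_right
    simp only [List.map_cons, List.map_nil, List.prod_cons, List.prod_nil, mul_one]
    apply conj_one (ζ 0 * ζ 1 * ζ 2)
    rw [← rel_one]; group; simp only [pow6, zpow6, mul_assoc]
  · refine ⟨[0, 1, 2, 3, 4, 0, 1, 2, 3, 4, 0, 1, 2, 3, 4, 0, 1, 2, 3, 4, 0, 1, 2, 3, 4, 0, 1, 2, 3], ?_⟩
    show (ζ 4)⁻¹ = _
    apply inv_eq_of_mul_eq_one_right
    simp only [List.map_cons, List.map_nil, List.prod_cons, List.prod_nil, mul_one]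
    apply conj_one (ζ 0 * ζ 1 * ζ 2 * ζ 3)
    rw [← rel_one]; group; simp only [pow6, zpow6, mul_assoc]

/-- Every element of `Map₂` is a positive word in the generators `ζ₁, …, ζ₅`. -/
theorem positive_words (g : Map₂) :
    ∃ l : List (Fin 5), g = (l.map ζ).prod := by

  obtain ⟨w, rfl⟩ := QuotientGroup.mk_surjective g
  induction w with
  | C1 => exact ⟨[], rfl⟩
  | of x => exact ⟨[x], by simp [List.map, List.prod_cons]; rfl⟩
  | inv_of x _ =>
    obtain ⟨l, hl⟩ := zeta_inv_pos x
    exact ⟨l, by rw [← hl]; rfl⟩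
  | mul x y hx hy =>
    obtain ⟨lx, hlx⟩ := hx
    obtain ⟨ly, hly⟩ := hy
    exact ⟨lx ++ ly, by rw [QuotientGroup.mk_mul, hlx, hly, List.map_append, List.prod_append]; rfl⟩
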